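/- (DKW-based quantile separation for multiple splits) Let F̃ be a continuous CDF, and let F̃_{n,1},...,F̃_{n,N} be empirical CDFs each from n i.i.d. samples from F̃. For α ∈ (0,1) and 2 ≤ N ≤ αn, P(min_{j=1,...,N} F̃_{n,j}^{-1}(1-α/N) ≤ F̃^{-1}(1-α/1.6)) ≤ 2N exp(-nα²/32), and P(F̃_{n,1}^{-1}(1-α) ≥ F̃^{-1}(1-α/1.4)) ≤ 2exp(-nα²/8). Hence with probability at least 1 - 2exp(-nα²/8) - 2N exp(-nα²/32), min_j F̃_{n,j}^{-1}(1-α/N) - F̃_{n,1}^{-1}(1-α) ≥ F̃^{-1}(1-α/1.6) - F̃^{-1}(1-α/1.4) > 0. -/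

import Mathlib

open MeasureTheory Finset Filter
open scoped Classical Topology ENNReal

/-- Empirical quantile function: `empInv n x p` is the generalized inverse, at
level `p`, of the empirical CDF of the sample `x : Fin n → ℝ`. -/
noncomputable def empInv (n : ℕ) (x : Fin n → ℝ) (p : ℝ) : ℝ :=
  sInf {t : ℝ | p ≤ ((Finset.univ.filter fun i => x i ≤ t).card : ℝ) / n}



lemma bernoulli_mgf {p : ℝ} (hp0 : 0 ≤ p) (hp1 : p ≤ 1) (θ : ℝ) :
    1 - p + p * Real.exp θ ≤ Real.exp (p * θ + θ ^ 2 / 8) := by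
  set g : ℝ → ℝ := fun t => 1 - p + p * Real.exp t with hgdef
  have hg : ∀ t, 0 < g t := by
    intro t
    rcases lt_or_eq_of_le hp1 with h | h
    · have := mul_nonneg hp0 (Real.exp_pos t).le
      simp only [hgdef]; linarith
    · simpa [hgdef, h] using Real.exp_pos t
  set φ : ℝ → ℝ := fun t => p * t + t ^ 2 / 8 - Real.log (g t) with hφdef
  set d1 : ℝ → ℝ := fun t => p + t / 4 - p * Real.exp t / g t with hd1def
  have hgd : ∀ t, HasDerivAt g (p * Real.exp t) t := by
    intro t
    exact ((Real.hasDerivAt_exp t).const_mul p).const_add (1 - p)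
  have hd1 : ∀ t, HasDerivAt φ (d1 t) t := by
    intro t
    have h1 : HasDerivAt (fun t : ℝ => p * t + t ^ 2 / 8) (p + 2 * t / 8) t := by
      exact (((hasDerivAt_id t).const_mul p).add ((hasDerivAt_pow 2 t).div_const 8)).congr_deriv
        (by norm_num)
    have h2 : HasDerivAt (fun t => Real.log (g t)) (p * Real.exp t / g t) t :=
      (hgd t).log (hg t).ne'
    have := h1.sub h2
    refine this.congr_deriv ?_
    simp only [hd1def]; ring
  have hd2 : ∀ t, HasDerivAt d1 (1 / 4 - p * Real.exp t * (1 - p) / g t ^ 2) t := by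
    intro t
    have h1 : HasDerivAt (fun t : ℝ => p + t / 4) (1 / 4) t := by
      simpa using ((hasDerivAt_id t).div_const 4).const_add p
    have h2 : HasDerivAt (fun t => p * Real.exp t / g t)
        ((p * Real.exp t * g t - p * Real.exp t * (p * Real.exp t)) / g t ^ 2) t :=
      ((Real.hasDerivAt_exp t).const_mul p).div (hgd t) (hg t).ne'
    have := h1.sub h2
    refine this.congr_deriv ?_
    have h3 : g t - p * Real.exp t = 1 - p := by simp only [hgdef]; ring
    rw [← h3]; ring
  have hd2nonneg : ∀ t, 0 ≤ 1 / 4 - p * Real.exp t * (1 - p) / g t ^ 2 := by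
    intro t
    have hgt := hg t
    have h4 : p * Real.exp t * (1 - p) / g t ^ 2 ≤ 1 / 4 := by
      rw [div_le_iff₀ (by positivity)]
      have : g t = p * Real.exp t + (1 - p) := by simp only [hgdef]; ring
      nlinarith [sq_nonneg (p * Real.exp t - (1 - p))]
    linarith
  have hmono : Monotone d1 := by
    apply monotone_of_deriv_nonneg (fun t => (hd2 t).differentiableAt)
    intro t
    rw [(hd2 t).deriv]
    exact hd2nonneg t
  have hd10 : d1 0 = 0 := by
    have : g 0 = 1 := by simp [hgdef]
    simp [hd1def, this]
  have hφ0 : φ 0 = 0 := by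
    have : g 0 = 1 := by simp [hgdef]
    simp [hφdef, this]
  have key : ∀ t, 0 ≤ φ t := by
    intro t
    rcases le_total 0 t with ht | ht
    · have hmO : MonotoneOn φ (Set.Ici 0) := by
        apply monotoneOn_of_deriv_nonneg (convex_Ici 0)
          (fun x _ => ((hd1 x).differentiableAt).continuousAt.continuousWithinAt)
          (fun x _ => ((hd1 x).differentiableAt).differentiableWithinAt)
        intro x hx
        rw [(hd1 x).deriv]
        rw [interior_Ici] at hx
        have : d1 0 ≤ d1 x := hmono (le_of_lt hx)
        linarith [hd10 ▸ this]
      have := hmO (Set.self_mem_Ici) (Set.mem_Ici.2 ht) ht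
      linarith [hφ0 ▸ this]
    · have hmO : AntitoneOn φ (Set.Iic 0) := by
        apply antitoneOn_of_deriv_nonpos (convex_Iic 0)
          (fun x _ => ((hd1 x).differentiableAt).continuousAt.continuousWithinAt)
          (fun x _ => ((hd1 x).differentiableAt).differentiableWithinAt)
        intro x hx
        rw [(hd1 x).deriv]
        rw [interior_Iic] at hx
        have : d1 x ≤ d1 0 := hmono (le_of_lt hx)
        linarith [hd10 ▸ this]
      have := hmO (Set.mem_Iic.2 ht) (Set.self_mem_Iic) ht
      linarith [hφ0 ▸ this]
  have hlog : Real.log (g θ) ≤ p * θ + θ ^ 2 / 8 := by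
    have := key θ
    simp only [hφdef] at this
    linarith
  calc 1 - p + p * Real.exp θ = g θ := rfl
    _ = Real.exp (Real.log (g θ)) := (Real.exp_log (hg θ)).symm
    _ ≤ Real.exp (p * θ + θ ^ 2 / 8) := Real.exp_le_exp.2 hlog



lemma lintegral_pi_prod {μ : Measure ℝ} [IsProbabilityMeasure μ] (f : ℝ → ℝ≥0∞)
    (hf : Measurable f) (n : ℕ) :
    ∫⁻ x : Fin n → ℝ, ∏ i, f (x i) ∂(Measure.pi fun _ : Fin n => μ)
      = (∫⁻ y, f y ∂μ) ^ n := by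
  induction n with
  | zero => simp
  | succ n ih =>
    have hpres := (MeasureTheory.measurePreserving_piFinSuccAbove
      (fun _ : Fin (n + 1) => μ) 0).symm
    have hmeas : Measurable fun x : Fin (n + 1) → ℝ => ∏ i, f (x i) :=
      Finset.measurable_prod _ fun i _ => hf.comp (measurable_pi_apply i)
    rw [← hpres.lintegral_comp hmeas]
    have heq : ∀ z : ℝ × (Fin n → ℝ),
        (∏ i, f (((MeasurableEquiv.piFinSuccAbove (fun _ : Fin (n+1) => ℝ) 0).symm z) i))
          = f z.1 * ∏ i, f (z.2 i) := by
      intro z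
      rw [Fin.prod_univ_succ]
      simp [MeasurableEquiv.piFinSuccAbove_symm_apply, Fin.insertNthEquiv,
        Fin.insertNth_zero, Fin.zero_succAbove]
    simp only [heq]
    rw [lintegral_prod_mul (f := f) (g := fun y : Fin n → ℝ => ∏ i, f (y i)) hf.aemeasurable
      ((Finset.measurable_prod _ fun i _ => hf.comp (measurable_pi_apply i)).aemeasurable), ih]
    ring

lemma count_tail (μ : Measure ℝ) [IsProbabilityMeasure μ] (S : Set ℝ)
    (hS : MeasurableSet S) (n : ℕ) (δ : ℝ) (hδ : 0 ≤ δ) :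
    (Measure.pi fun _ : Fin n => μ)
      {x | ((μ S).toReal + δ) * n ≤ ((Finset.univ.filter fun i => x i ∈ S).card : ℝ)}
      ≤ ENNReal.ofReal (Real.exp (-(2 * n * δ ^ 2))) := by
  set p := (μ S).toReal with hpdef
  have hp0 : 0 ≤ p := ENNReal.toReal_nonneg
  have hp1 : p ≤ 1 := by
    have h := prob_le_one (μ := μ) (s := S)
    simpa using ENNReal.toReal_mono (by simp) h
  set θ := 4 * δ with hθdef
  have hθ : 0 ≤ θ := by positivity
  set f : ℝ → ℝ≥0∞ := fun y => if y ∈ S then ENNReal.ofReal (Real.exp θ) else 1 with hfdef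
  have hfmeas : Measurable f := Measurable.ite hS measurable_const measurable_const
  -- single-coordinate integral
  have hint : ∫⁻ y, f y ∂μ = ENNReal.ofReal (1 - p + p * Real.exp θ) := by
    rw [← lintegral_add_compl f hS]
    have h1 : ∫⁻ y in S, f y ∂μ = ENNReal.ofReal (Real.exp θ) * μ S := by
      rw [setLIntegral_congr_fun (g := fun _ => ENNReal.ofReal (Real.exp θ)) hS
        (fun y hy => by simp [hfdef, hy])]
      simp [lintegral_const]
    have h2 : ∫⁻ y in Sᶜ, f y ∂μ = μ Sᶜ := by
      rw [setLIntegral_congr_fun (g := fun _ => (1 : ℝ≥0∞)) hS.compl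
        (fun y (hy : y ∈ Sᶜ) => by simp [hfdef, Set.notMem_of_mem_compl hy])]
      simp [lintegral_const]
    rw [h1, h2, prob_compl_eq_one_sub hS]
    have hμS : μ S = ENNReal.ofReal p := (ENNReal.ofReal_toReal (measure_ne_top μ S)).symm
    rw [hμS]
    rw [show (1 : ℝ≥0∞) - ENNReal.ofReal p = ENNReal.ofReal (1 - p) by
      rw [ENNReal.ofReal_sub 1 hp0, ENNReal.ofReal_one]]
    rw [← ENNReal.ofReal_mul (Real.exp_pos θ).le, ← ENNReal.ofReal_add
      (by positivity) (by linarith)]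
    congr 1
    ring
  set g : (Fin n → ℝ) → ℝ≥0∞ := fun x => ∏ i, f (x i) with hgdef
  have hgmeas : Measurable g :=
    Finset.measurable_prod _ fun i _ => hfmeas.comp (measurable_pi_apply i)
  set c : ℝ≥0∞ := ENNReal.ofReal (Real.exp (θ * ((p + δ) * n))) with hcdef
  have hgval : ∀ x : Fin n → ℝ,
      g x = ENNReal.ofReal (Real.exp (θ * ((Finset.univ.filter fun i => x i ∈ S).card : ℝ))) := by
    intro x
    rw [hgdef]
    simp only [hfdef]
    rw [Finset.prod_ite, Finset.prod_const, Finset.prod_const, one_pow, mul_one]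
    rw [← ENNReal.ofReal_pow (Real.exp_pos θ).le, ← Real.exp_nat_mul]
    congr 1
    ring
  have hsub : {x : Fin n → ℝ | ((μ S).toReal + δ) * n
        ≤ ((Finset.univ.filter fun i => x i ∈ S).card : ℝ)} ⊆ {x | c ≤ g x} := by
    intro x hx
    simp only [Set.mem_setOf_eq] at hx ⊢
    rw [hgval x, hcdef]
    exact ENNReal.ofReal_le_ofReal (Real.exp_le_exp.2 (by
      have := mul_le_mul_of_nonneg_left hx hθ
      linarith))
  refine le_trans (measure_mono hsub) ?_
  have hmarkov := mul_meas_ge_le_lintegral₀ (μ := Measure.pi fun _ : Fin n => μ)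
    hgmeas.aemeasurable c
  have hc0 : c ≠ 0 := by simp [hcdef, Real.exp_pos]
  have hctop : c ≠ ⊤ := ENNReal.ofReal_ne_top
  have hmu : (Measure.pi fun _ : Fin n => μ) {x | c ≤ g x}
      ≤ (∫⁻ x, g x ∂(Measure.pi fun _ : Fin n => μ)) / c := by
    rw [ENNReal.le_div_iff_mul_le (Or.inl hc0) (Or.inl hctop), mul_comm]
    exact hmarkov
  refine le_trans hmu ?_
  rw [hgdef, lintegral_pi_prod f hfmeas n, hint]
  have hV : ENNReal.ofReal (1 - p + p * Real.exp θ) ^ n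
      ≤ ENNReal.ofReal (Real.exp ((n : ℝ) * (p * θ + θ ^ 2 / 8))) := by
    calc ENNReal.ofReal (1 - p + p * Real.exp θ) ^ n
        ≤ ENNReal.ofReal (Real.exp (p * θ + θ ^ 2 / 8)) ^ n := by
          exact pow_le_pow_left' (ENNReal.ofReal_le_ofReal (bernoulli_mgf hp0 hp1 θ)) n
      _ = ENNReal.ofReal (Real.exp (p * θ + θ ^ 2 / 8) ^ n) := by
          rw [ENNReal.ofReal_pow (Real.exp_pos _).le]
      _ = ENNReal.ofReal (Real.exp ((n : ℝ) * (p * θ + θ ^ 2 / 8))) := by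
          rw [← Real.exp_nat_mul]
  refine le_trans (ENNReal.div_le_div_right hV c) ?_
  rw [hcdef, ← ENNReal.ofReal_div_of_pos (Real.exp_pos _), ← Real.exp_sub]
  apply le_of_eq
  congr 1
  rw [hθdef]
  ring


lemma pi_marginal {ι : Type*} [Fintype ι] {X : Type*} [MeasurableSpace X]
    (μ : Measure X) [IsProbabilityMeasure μ] (j : ι) (B : Set X) (hB : MeasurableSet B) :
    Measure.pi (fun _ : ι => μ) {ω | ω j ∈ B} = μ B := by
  have h1 : {ω : ι → X | ω j ∈ B} = Function.eval j ⁻¹' B := rfl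
  rw [h1, Set.eval_preimage, Measure.pi_pi]
  have h2 : ∀ i : ι, μ (Function.update (fun _ => Set.univ) j B i)
      = Function.update (fun _ : ι => μ Set.univ) j (μ B) i := by
    intro i
    exact Function.apply_update (fun _ s => μ s) (fun _ => Set.univ) j B i
  rw [Finset.prod_congr rfl fun i _ => h2 i]
  rw [Finset.prod_update_of_mem (Finset.mem_univ j)]
  simp [measure_univ]

lemma count_ge_of_empInv_le {n : ℕ} (hn : 0 < n) (x : Fin n → ℝ) {β q : ℝ}
    (hβ1 : β ≤ 1) (h : empInv n x β ≤ q) :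
    β * n ≤ ((Finset.univ.filter fun i => x i ≤ q).card : ℝ) := by
  by_contra hc
  push_neg at hc
  haveI : Nonempty (Fin n) := ⟨⟨0, hn⟩⟩
  set T := {t : ℝ | β ≤ ((Finset.univ.filter fun i => x i ≤ t).card : ℝ) / n} with hTdef
  have hnpos : (0 : ℝ) < n := by exact_mod_cast hn
  -- T is nonempty
  have hMT : (Finset.univ.sup' Finset.univ_nonempty x) ∈ T := by
    have hall : (Finset.univ.filter fun i => x i ≤ Finset.univ.sup' Finset.univ_nonempty x)
        = Finset.univ := by
      apply Finset.filter_true_of_mem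
      intro i _
      exact Finset.le_sup' x (Finset.mem_univ i)
    simp only [hTdef, Set.mem_setOf_eq, hall, Finset.card_univ, Fintype.card_fin]
    rw [div_self hnpos.ne']
    exact hβ1
  -- the set of indices exceeding q
  set A := Finset.univ.filter fun i => q < x i with hAdef
  rcases Finset.eq_empty_or_nonempty A with hA | hA
  · -- all samples ≤ q, so the count is n, contradiction with hc
    have hall : (Finset.univ.filter fun i => x i ≤ q) = Finset.univ := by
      apply Finset.filter_true_of_mem
      intro i _
      by_contra hxi
      have : i ∈ A := by simp [hAdef, lt_of_not_ge hxi]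
      simp [hA] at this
    rw [hall] at hc
    have : β * n ≤ n := by nlinarith
    simp only [Finset.card_univ, Fintype.card_fin] at hc
    linarith
  · set q' := A.inf' hA x with hq'def
    have hqq' : q < q' := by
      rw [hq'def]
      rw [Finset.lt_inf'_iff]
      intro i hi
      exact (Finset.mem_filter.1 hi).2
    have hlb : ∀ t ∈ T, q' ≤ t := by
      intro t ht
      by_contra hlt
      push_neg at hlt
      have hsub : (Finset.univ.filter fun i => x i ≤ t)
          ⊆ (Finset.univ.filter fun i => x i ≤ q) := by
        intro i hi
        rw [Finset.mem_filter] at hi ⊢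
        refine ⟨hi.1, ?_⟩
        by_contra hxi
        have hiA : i ∈ A := by simp [hAdef, lt_of_not_ge hxi]
        have := Finset.inf'_le x hiA
        linarith [hi.2]
      have hcard : ((Finset.univ.filter fun i => x i ≤ t).card : ℝ)
          ≤ ((Finset.univ.filter fun i => x i ≤ q).card : ℝ) := by
        exact_mod_cast Finset.card_le_card hsub
      have : β ≤ ((Finset.univ.filter fun i => x i ≤ t).card : ℝ) / n := ht
      rw [le_div_iff₀ hnpos] at this
      linarith
    have : q' ≤ empInv n x β := le_csInf ⟨_, hMT⟩ hlb
    linarith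

lemma count_lt_of_le_empInv {n : ℕ} (hn : 0 < n) (x : Fin n → ℝ) {β q : ℝ}
    (hβ0 : 0 < β) (h : q ≤ empInv n x β) :
    ((Finset.univ.filter fun i => x i < q).card : ℝ) ≤ β * n := by
  by_contra hc
  push_neg at hc
  haveI : Nonempty (Fin n) := ⟨⟨0, hn⟩⟩
  set T := {t : ℝ | β ≤ ((Finset.univ.filter fun i => x i ≤ t).card : ℝ) / n} with hTdef
  have hnpos : (0 : ℝ) < n := by exact_mod_cast hn
  set B := Finset.univ.filter fun i => x i < q with hBdef
  have hB : B.Nonempty := by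
    rw [← Finset.card_pos]
    by_contra hcard
    push_neg at hcard
    have hcd : B.card = 0 := Nat.le_zero.mp hcard
    rw [hcd] at hc
    push_cast at hc
    nlinarith
  set q' := B.sup' hB x with hq'def
  have hq'q : q' < q := by
    rw [hq'def, Finset.sup'_lt_iff]
    intro i hi
    exact (Finset.mem_filter.1 hi).2
  have hq'T : q' ∈ T := by
    have hsub : B ⊆ Finset.univ.filter fun i => x i ≤ q' := by
      intro i hi
      rw [Finset.mem_filter]
      exact ⟨Finset.mem_univ i, Finset.le_sup' x hi⟩
    have hcard : (B.card : ℝ) ≤ ((Finset.univ.filter fun i => x i ≤ q').card : ℝ) := by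
      exact_mod_cast Finset.card_le_card hsub
    simp only [hTdef, Set.mem_setOf_eq]
    rw [le_div_iff₀ hnpos]
    nlinarith
  have hbdd : BddBelow T := by
    refine ⟨Finset.univ.inf' Finset.univ_nonempty x, ?_⟩
    intro t ht
    have : β ≤ ((Finset.univ.filter fun i => x i ≤ t).card : ℝ) / n := ht
    rw [le_div_iff₀ hnpos] at this
    have hpos : 0 < ((Finset.univ.filter fun i => x i ≤ t).card : ℝ) := by nlinarith
    have hne : (Finset.univ.filter fun i => x i ≤ t).Nonempty := by
      rw [← Finset.card_pos]
      exact_mod_cast hpos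
    obtain ⟨i, hi⟩ := hne
    have hxi : x i ≤ t := (Finset.mem_filter.1 hi).2
    exact le_trans (Finset.inf'_le x (Finset.mem_univ i)) hxi
  have : empInv n x β ≤ q' := csInf_le hbdd hq'T
  linarith

section CDF
variable (Q : Measure ℝ) [IsProbabilityMeasure Q] (F : ℝ → ℝ)

lemma F_mono (hF : ∀ t, F t = (Q (Set.Iic t)).toReal) : Monotone F := by
  intro a b hab
  rw [hF, hF]
  exact ENNReal.toReal_mono (measure_ne_top Q _)
    (measure_mono (Set.Iic_subset_Iic.2 hab))

lemma F_tendsto_atTop (hF : ∀ t, F t = (Q (Set.Iic t)).toReal) :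
    Tendsto F atTop (𝓝 1) := by
  have h1 := tendsto_measure_Iic_atTop (μ := Q)
  have h2 : Tendsto (fun t => (Q (Set.Iic t)).toReal) atTop (𝓝 (Q Set.univ).toReal) :=
    (ENNReal.tendsto_toReal (measure_ne_top Q _)).comp h1
  simp only [measure_univ, ENNReal.toReal_one] at h2
  convert h2 using 1
  funext t; exact hF t

lemma F_tendsto_atBot (hF : ∀ t, F t = (Q (Set.Iic t)).toReal) :
    Tendsto F atBot (𝓝 0) := by
  have h1 : Tendsto (fun t : ℝ => Q (Set.Iic t)) atBot (𝓝 (Q (⋂ t : ℝ, Set.Iic t))) := by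
    have := tendsto_measure_iInter_atBot (μ := Q) (s := fun t : ℝ => Set.Iic t)
      (fun t => measurableSet_Iic.nullMeasurableSet) (fun a b hab => Set.Iic_subset_Iic.2 hab)
      ⟨0, measure_ne_top Q _⟩
    exact this
  have hempty : (⋂ t : ℝ, Set.Iic t) = ∅ := by
    ext y
    simp only [Set.mem_iInter, Set.mem_Iic, Set.mem_empty_iff_false, iff_false, not_forall]
    exact ⟨y - 1, by push_neg; linarith⟩
  rw [hempty, measure_empty] at h1
  have h2 : Tendsto (fun t => (Q (Set.Iic t)).toReal) atBot (𝓝 (0 : ℝ≥0∞).toReal) :=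
    (ENNReal.tendsto_toReal (by simp)).comp h1
  simp only [ENNReal.toReal_zero] at h2
  convert h2 using 1
  funext t; exact hF t

lemma F_qF_eq (hF : ∀ t, F t = (Q (Set.Iic t)).toReal) (hFcont : Continuous F)
    {p : ℝ} (hp0 : 0 < p) (hp1 : p < 1) :
    F (sInf {t | p ≤ F t}) = p
      ∧ BddBelow {t | p ≤ F t} ∧ Set.Nonempty {t | p ≤ F t} := by
  have hmono := F_mono Q F hF
  obtain ⟨t1, ht1⟩ := ((F_tendsto_atTop Q F hF).eventually (eventually_ge_nhds hp1)).exists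
  obtain ⟨t0, ht0⟩ := ((F_tendsto_atBot Q F hF).eventually (eventually_lt_nhds hp0)).exists
  set T := {t : ℝ | p ≤ F t} with hTdef
  have hTne : T.Nonempty := ⟨t1, ht1⟩
  have hTbdd : BddBelow T := by
    refine ⟨t0, fun t ht => ?_⟩
    by_contra hlt
    push_neg at hlt
    have := hmono hlt.le
    have : p ≤ F t0 := le_trans ht this
    linarith
  have hTclosed : IsClosed T := isClosed_Ici.preimage hFcont
  have hmem : sInf T ∈ T := hTclosed.csInf_mem hTne hTbdd
  have hq : p ≤ F (sInf T) := hmem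
  have ht0q : t0 ≤ sInf T := by
    by_contra hlt
    push_neg at hlt
    have := hmono hlt.le
    linarith
  have hivt := intermediate_value_Icc ht0q hFcont.continuousOn
  have hpmem : p ∈ Set.Icc (F t0) (F (sInf T)) := ⟨ht0.le, hq⟩
  obtain ⟨c, hc1, hc2⟩ := hivt hpmem
  have hcT : c ∈ T := by rw [hTdef]; simp [hc2]
  have : sInf T ≤ c := csInf_le hTbdd hcT
  have hcq : c = sInf T := le_antisymm hc1.2 this
  exact ⟨by rw [← hcq, hc2], hTbdd, hTne⟩

lemma atom_zero (hF : ∀ t, F t = (Q (Set.Iic t)).toReal) (hFcont : Continuous F)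
    (t : ℝ) : Q {t} = 0 := by
  have key : ∀ s, s < t → (Q {t}).toReal ≤ F t - F s := by
    intro s hs
    have hunion : Set.Iic s ∪ Set.Ioc s t = Set.Iic t := Set.Iic_union_Ioc_eq_Iic hs.le
    have hdisj : Disjoint (Set.Iic s) (Set.Ioc s t) := Set.Iic_disjoint_Ioc le_rfl
    have hmeas := measure_union hdisj measurableSet_Ioc (μ := Q)
    rw [hunion] at hmeas
    have htR : (Q (Set.Iic t)).toReal
        = (Q (Set.Iic s)).toReal + (Q (Set.Ioc s t)).toReal := by
      rw [hmeas, ENNReal.toReal_add (measure_ne_top Q _) (measure_ne_top Q _)]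
    have hsub : Q {t} ≤ Q (Set.Ioc s t) := by
      apply measure_mono
      intro y hy
      simp only [Set.mem_singleton_iff] at hy
      subst hy
      exact ⟨hs, le_rfl⟩
    have := ENNReal.toReal_mono (measure_ne_top Q _) hsub
    rw [hF, hF]
    linarith [htR, this]
  have hseq : Tendsto (fun k : ℕ => t - 1 / (k + 1)) atTop (𝓝 t) := by
    have h0 : Tendsto (fun k : ℕ => 1 / ((k : ℝ) + 1)) atTop (𝓝 0) :=
      tendsto_one_div_add_atTop_nhds_zero_nat
    have := tendsto_const_nhds (x := t) (f := atTop (α := ℕ)) |>.sub h0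
    simpa using this
  have hFseq : Tendsto (fun k : ℕ => F t - F (t - 1 / (k + 1))) atTop (𝓝 0) := by
    have := (tendsto_const_nhds (x := F t) (f := atTop (α := ℕ))).sub
      ((hFcont.tendsto t).comp hseq)
    simpa using this
  have hle : (Q {t}).toReal ≤ 0 := by
    refine ge_of_tendsto hFseq (Eventually.of_forall fun k => ?_)
    apply key
    have : (0 : ℝ) < 1 / ((k : ℝ) + 1) := by positivity
    linarith
  have h0 : (Q {t}).toReal = 0 := le_antisymm hle ENNReal.toReal_nonneg
  rcases (ENNReal.toReal_eq_zero_iff _).mp h0 with h | h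
  · exact h
  · exact absurd h (measure_ne_top Q _)

lemma Ici_toReal (hF : ∀ t, F t = (Q (Set.Iic t)).toReal) (hFcont : Continuous F)
    (t : ℝ) : (Q (Set.Ici t)).toReal = 1 - F t := by
  have hatom := atom_zero Q F hF hFcont t
  have h1 : Q (Set.Ici t) = Q (Set.Ioi t) := by
    apply le_antisymm
    · have : Set.Ici t ⊆ {t} ∪ Set.Ioi t := by
        intro y hy
        rcases eq_or_lt_of_le (Set.mem_Ici.1 hy) with h | h
        · exact Or.inl (by simp [← h])
        · exact Or.inr h
      calc Q (Set.Ici t) ≤ Q ({t} ∪ Set.Ioi t) := measure_mono this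
        _ ≤ Q {t} + Q (Set.Ioi t) := measure_union_le _ _
        _ = Q (Set.Ioi t) := by rw [hatom, zero_add]
    · exact measure_mono Set.Ioi_subset_Ici_self
  have h2 : Set.Ioi t = (Set.Iic t)ᶜ := (Set.compl_Iic).symm
  rw [h1, h2, prob_compl_eq_one_sub measurableSet_Iic,
    ENNReal.toReal_sub_of_le prob_le_one ENNReal.one_ne_top, ENNReal.toReal_one, hF]
end CDF


lemma count_measurable (S : Set ℝ) (hS : MeasurableSet S) (n : ℕ) :
    Measurable (fun x : Fin n → ℝ => ((Finset.univ.filter fun i => x i ∈ S).card : ℝ)) := by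
  have h : (fun x : Fin n → ℝ => ((Finset.univ.filter fun i => x i ∈ S).card : ℝ))
      = fun x => ∑ i : Fin n, if x i ∈ S then (1 : ℝ) else 0 := by
    funext x
    rw [Finset.sum_boole]
  rw [h]
  exact Finset.measurable_sum _ fun i _ =>
    Measurable.ite (measurable_pi_apply i hS) measurable_const measurable_const

set_option maxHeartbeats 1000000 in
theorem dkw_quantile_separation
    (Q : Measure ℝ) [IsProbabilityMeasure Q]
    (n N : ℕ) (α : ℝ) (hα : α ∈ Set.Ioo (0 : ℝ) 1)
    (hN : 2 ≤ N) (hNn : (N : ℝ) ≤ α * n)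
    (F : ℝ → ℝ) (hF : ∀ t, F t = (Q (Set.Iic t)).toReal) (hFcont : Continuous F)
    (qF : ℝ → ℝ) (hqF : ∀ p, qF p = sInf {t | p ≤ F t})
    (hstrict : StrictMonoOn F (Set.Icc (qF (1 - α / 1.4)) (qF (1 - α / 1.6)))) :
    (Measure.pi fun _ : Fin N => Measure.pi fun _ : Fin n => Q)
        {ω | ∃ j : Fin N, empInv n (ω j) (1 - α / N) ≤ qF (1 - α / 1.6)}
      ≤ ENNReal.ofReal (2 * N * Real.exp (-(n : ℝ) * α ^ 2 / 32))
    ∧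
    (Measure.pi fun _ : Fin N => Measure.pi fun _ : Fin n => Q)
        {ω | qF (1 - α / 1.4) ≤ empInv n (ω ⟨0, by omega⟩) (1 - α)}
      ≤ ENNReal.ofReal (2 * Real.exp (-(n : ℝ) * α ^ 2 / 8))
    ∧
    (ENNReal.ofReal (1 - 2 * Real.exp (-(n : ℝ) * α ^ 2 / 8)
          - 2 * N * Real.exp (-(n : ℝ) * α ^ 2 / 32)) ≤
        (Measure.pi fun _ : Fin N => Measure.pi fun _ : Fin n => Q)
          {ω | ∀ j : Fin N,
            qF (1 - α / 1.6) - qF (1 - α / 1.4)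
              ≤ empInv n (ω j) (1 - α / N) - empInv n (ω ⟨0, by omega⟩) (1 - α)}) 
    ∧ 0 < qF (1 - α / 1.6) - qF (1 - α / 1.4) := by
  obtain ⟨hα0, hα1⟩ := hα
  have hN2 : (2 : ℝ) ≤ N := by exact_mod_cast hN
  have hn : 0 < n := by
    rcases Nat.eq_zero_or_pos n with h | h
    · exfalso; rw [h] at hNn; push_cast at hNn; nlinarith
    · exact h
  have hnR : (0 : ℝ) < n := by exact_mod_cast hn
  -- quantile levels
  have h16a : (0 : ℝ) < α / 1.6 := by positivity
  have h16b : α / 1.6 < 1 := by rw [div_lt_one (by norm_num : (0:ℝ) < 1.6)]; linarith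
  have h14a : (0 : ℝ) < α / 1.4 := by positivity
  have h14b : α / 1.4 < 1 := by rw [div_lt_one (by norm_num : (0:ℝ) < 1.4)]; linarith
  have h1416 : α / 1.6 < α / 1.4 :=
    div_lt_div_of_pos_left hα0 (by norm_num) (by norm_num)
  have hp16pos : (0 : ℝ) < 1 - α / 1.6 := by linarith
  have hp16lt : (1 : ℝ) - α / 1.6 < 1 := by linarith
  have hp14pos : (0 : ℝ) < 1 - α / 1.4 := by linarith
  have hp14lt : (1 : ℝ) - α / 1.4 < 1 := by linarith
  obtain ⟨hF16, hbdd16, hne16⟩ := F_qF_eq Q F hF hFcont hp16pos hp16lt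
  obtain ⟨hF14, hbdd14, hne14⟩ := F_qF_eq Q F hF hFcont hp14pos hp14lt
  set q16 := qF (1 - α / 1.6) with hq16def
  set q14 := qF (1 - α / 1.4) with hq14def
  have hq16 : q16 = sInf {t | 1 - α / 1.6 ≤ F t} := hqF _
  have hq14 : q14 = sInf {t | 1 - α / 1.4 ≤ F t} := hqF _
  rw [← hq16] at hF16
  rw [← hq14] at hF14
  -- part 4 : strict separation of the true quantiles
  have hq1416 : q14 < q16 := by
    have hle : q14 ≤ q16 := by
      rw [hq14, hq16]
      apply csInf_le_csInf hbdd14 hne16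
      intro t ht
      simp only [Set.mem_setOf_eq] at ht ⊢
      nlinarith
    rcases lt_or_eq_of_le hle with h | h
    · exact h
    · exfalso
      rw [h] at hF14
      rw [hF14] at hF16
      nlinarith
  have hpos : 0 < q16 - q14 := by linarith
  -- measurable target sets
  have hSa : MeasurableSet (Set.Iic q16) := measurableSet_Iic
  have hSb : MeasurableSet (Set.Ici q14) := measurableSet_Ici
  have hQa : (Q (Set.Iic q16)).toReal = 1 - α / 1.6 := by rw [← hF q16]; exact hF16
  have hQb : (Q (Set.Ici q14)).toReal = α / 1.4 := by
    rw [Ici_toReal Q F hF hFcont q14, hF14]; ring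
  -- the per-coordinate bad events
  set Ba : Set (Fin n → ℝ) := {x | ((Q (Set.Iic q16)).toReal + α / 8) * n
      ≤ ((Finset.univ.filter fun i => x i ∈ Set.Iic q16).card : ℝ)} with hBadef
  set Bb : Set (Fin n → ℝ) := {x | ((Q (Set.Ici q14)).toReal + 2 * α / 7) * n
      ≤ ((Finset.univ.filter fun i => x i ∈ Set.Ici q14).card : ℝ)} with hBbdef
  have hBameas : MeasurableSet Ba :=
    measurableSet_le measurable_const (count_measurable _ hSa n)
  have hBbmeas : MeasurableSet Bb :=
    measurableSet_le measurable_const (count_measurable _ hSb n)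
  have hBabound : (Measure.pi fun _ : Fin n => Q) Ba
      ≤ ENNReal.ofReal (Real.exp (-(n : ℝ) * α ^ 2 / 32)) := by
    refine le_trans (count_tail Q _ hSa n (α / 8) (by positivity)) ?_
    apply ENNReal.ofReal_le_ofReal
    apply le_of_eq
    congr 1
    ring
  have hBbbound : (Measure.pi fun _ : Fin n => Q) Bb
      ≤ ENNReal.ofReal (2 * Real.exp (-(n : ℝ) * α ^ 2 / 8)) := by
    refine le_trans (count_tail Q _ hSb n (2 * α / 7) (by positivity)) ?_
    apply ENNReal.ofReal_le_ofReal
    have h1 : Real.exp (-(2 * (n : ℝ) * (2 * α / 7) ^ 2)) ≤ Real.exp (-(n : ℝ) * α ^ 2 / 8) := by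
      apply Real.exp_le_exp.2
      nlinarith [sq_nonneg α]
    nlinarith [Real.exp_pos (-(n : ℝ) * α ^ 2 / 8)]
  -- event inclusions
  have hinclA : ∀ (x : Fin n → ℝ), empInv n x (1 - α / N) ≤ q16 → x ∈ Ba := by
    intro x hx
    have hβ1 : 1 - α / N ≤ 1 := by
      have : 0 ≤ α / N := by positivity
      linarith
    have hcount := count_ge_of_empInv_le hn x hβ1 hx
    have hfe : (Finset.univ.filter fun i => x i ≤ q16)
        = (Finset.univ.filter fun i => x i ∈ Set.Iic q16) := by
      apply Finset.filter_congr
      intro i _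
      simp [Set.mem_Iic]
    rw [hfe] at hcount
    simp only [hBadef, Set.mem_setOf_eq, hQa]
    refine le_trans ?_ hcount
    apply mul_le_mul_of_nonneg_right _ hnR.le
    have hNpos : (0 : ℝ) < N := by linarith
    have h1 : α / (N : ℝ) ≤ α / 2 := by
      apply div_le_div_of_nonneg_left hα0.le _ hN2; norm_num
    have h2 : α / 1.6 = 5 * α / 8 := by
      rw [show (1.6 : ℝ) = 8 / 5 by norm_num]
      ring
    linarith
  have hinclB : ∀ (x : Fin n → ℝ), q14 ≤ empInv n x (1 - α) → x ∈ Bb := by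
    intro x hx
    have hβ0 : (0 : ℝ) < 1 - α := by linarith
    have hcount := count_lt_of_le_empInv hn x hβ0 hx
    have hsplit := Finset.card_filter_add_card_filter_not
      (s := (Finset.univ : Finset (Fin n))) (p := fun i => x i < q14)
    have hfe : (Finset.univ.filter fun i => ¬ x i < q14)
        = (Finset.univ.filter fun i => x i ∈ Set.Ici q14) := by
      apply Finset.filter_congr
      intro i _
      simp [Set.mem_Ici, not_lt]
    rw [hfe] at hsplit
    simp only [Finset.card_univ, Fintype.card_fin] at hsplit
    have hcast : ((Finset.univ.filter fun i => x i ∈ Set.Ici q14).card : ℝ)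
        = (n : ℝ) - ((Finset.univ.filter fun i => x i < q14).card : ℝ) := by
      have := hsplit
      push_cast [← this]
      ring
    simp only [hBbdef, Set.mem_setOf_eq, hQb]
    rw [hcast]
    have he : (α / 1.4 + 2 * α / 7) = α := by
      rw [show (1.4 : ℝ) = 7 / 5 by norm_num]
      field_simp
      ring
    rw [he]
    nlinarith
  -- part (a)
  have parta : (Measure.pi fun _ : Fin N => Measure.pi fun _ : Fin n => Q)
      {ω | ∃ j : Fin N, empInv n (ω j) (1 - α / N) ≤ q16}
      ≤ ENNReal.ofReal (2 * N * Real.exp (-(n : ℝ) * α ^ 2 / 32)) := by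
    have hsub : {ω : Fin N → Fin n → ℝ | ∃ j : Fin N, empInv n (ω j) (1 - α / N) ≤ q16}
        ⊆ ⋃ j : Fin N, {ω : Fin N → Fin n → ℝ | ω j ∈ Ba} := by
      rintro ω ⟨j, hj⟩
      exact Set.mem_iUnion.2 ⟨j, hinclA (ω j) hj⟩
    refine le_trans (measure_mono hsub) (le_trans (measure_iUnion_le _) ?_)
    have hmarg : ∀ j : Fin N, (Measure.pi fun _ : Fin N => Measure.pi fun _ : Fin n => Q)
        {ω : Fin N → Fin n → ℝ | ω j ∈ Ba} = (Measure.pi fun _ : Fin n => Q) Ba :=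
      fun j => pi_marginal _ j Ba hBameas
    calc ∑' j : Fin N, (Measure.pi fun _ : Fin N => Measure.pi fun _ : Fin n => Q)
          {ω : Fin N → Fin n → ℝ | ω j ∈ Ba}
        = ∑ j : Fin N, (Measure.pi fun _ : Fin n => Q) Ba := by
          rw [tsum_fintype]; exact Finset.sum_congr rfl fun j _ => hmarg j
      _ = (N : ℝ≥0∞) * (Measure.pi fun _ : Fin n => Q) Ba := by
          rw [Finset.sum_const, Finset.card_univ, Fintype.card_fin, nsmul_eq_mul]
      _ ≤ (N : ℝ≥0∞) * ENNReal.ofReal (Real.exp (-(n : ℝ) * α ^ 2 / 32)) := by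
          exact mul_le_mul_right hBabound _
      _ ≤ ENNReal.ofReal (2 * N * Real.exp (-(n : ℝ) * α ^ 2 / 32)) := by
          rw [← ENNReal.ofReal_natCast N, ← ENNReal.ofReal_mul (by positivity)]
          apply ENNReal.ofReal_le_ofReal
          nlinarith [Real.exp_pos (-(n : ℝ) * α ^ 2 / 32), hN2]
  -- part (b)
  have partb : (Measure.pi fun _ : Fin N => Measure.pi fun _ : Fin n => Q)
      {ω | q14 ≤ empInv n (ω (⟨0, by omega⟩ : Fin N)) (1 - α)}
      ≤ ENNReal.ofReal (2 * Real.exp (-(n : ℝ) * α ^ 2 / 8)) := by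
    have hsub : {ω : Fin N → Fin n → ℝ | q14 ≤ empInv n (ω (⟨0, by omega⟩ : Fin N)) (1 - α)}
        ⊆ {ω : Fin N → Fin n → ℝ | ω (⟨0, by omega⟩ : Fin N) ∈ Bb} :=
      fun ω hω => hinclB _ hω
    refine le_trans (measure_mono hsub) ?_
    rw [pi_marginal _ _ Bb hBbmeas]
    exact hBbbound
  refine ⟨parta, partb, ?_, hpos⟩
  -- part (c)
  set A := {ω : Fin N → Fin n → ℝ | ∃ j : Fin N, empInv n (ω j) (1 - α / N) ≤ q16} with hAdef
  set B := {ω : Fin N → Fin n → ℝ | q14 ≤ empInv n (ω (⟨0, by omega⟩ : Fin N)) (1 - α)}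
    with hBdef
  set C := {ω : Fin N → Fin n → ℝ | ∀ j : Fin N,
      q16 - q14 ≤ empInv n (ω j) (1 - α / N) - empInv n (ω (⟨0, by omega⟩ : Fin N)) (1 - α)}
    with hCdef
  set P := (Measure.pi fun _ : Fin N => Measure.pi fun _ : Fin n => Q) with hPdef
  have hCsub : (A ∪ B)ᶜ ⊆ C := by
    intro ω hω
    rw [Set.mem_compl_iff, Set.mem_union] at hω
    push_neg at hω
    obtain ⟨hA, hB⟩ := hω
    simp only [hAdef, Set.mem_setOf_eq, not_exists, not_le] at hA
    simp only [hBdef, Set.mem_setOf_eq, not_le] at hB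
    intro j
    have h1 := hA j
    linarith
  have h1 : (1 : ℝ≥0∞) ≤ P (A ∪ B) + P ((A ∪ B)ᶜ) := by
    have : (1 : ℝ≥0∞) = P Set.univ := (measure_univ).symm
    rw [this, ← Set.union_compl_self (A ∪ B)]
    exact measure_union_le _ _
  have h2 : P (A ∪ B) ≤ ENNReal.ofReal (2 * Real.exp (-(n : ℝ) * α ^ 2 / 8)
      + 2 * N * Real.exp (-(n : ℝ) * α ^ 2 / 32)) := by
    refine le_trans (measure_union_le A B)
      (le_trans (add_le_add parta partb) (le_of_eq ?_))
    rw [← ENNReal.ofReal_add (by positivity) (by positivity)]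
    congr 1
    ring
  have h3 : (1 : ℝ≥0∞) ≤ ENNReal.ofReal (2 * Real.exp (-(n : ℝ) * α ^ 2 / 8)
      + 2 * N * Real.exp (-(n : ℝ) * α ^ 2 / 32)) + P C :=
    le_trans h1 (add_le_add h2 (measure_mono hCsub))
  have h4 : ENNReal.ofReal (1 - 2 * Real.exp (-(n : ℝ) * α ^ 2 / 8)
      - 2 * N * Real.exp (-(n : ℝ) * α ^ 2 / 32))
      = ENNReal.ofReal 1 - ENNReal.ofReal (2 * Real.exp (-(n : ℝ) * α ^ 2 / 8)
        + 2 * N * Real.exp (-(n : ℝ) * α ^ 2 / 32)) := by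
    rw [← ENNReal.ofReal_sub 1 (by positivity)]
    congr 1
    ring
  rw [h4, ENNReal.ofReal_one]
  rw [tsub_le_iff_left]
  exact h3
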